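/- arXiv:1811.06221 — 3 statements merged into one kernel-verified Lean document; each statement's English description precedes it below -/
import Mathlib

section
/- The range of P_χ equals the sum (supremum) of all G-invariant subspaces p of W such that the representation of G on p obtained by restricting ρ is isomorphic to M. In particular, the image of the projection P_χ is the M-isotypic component of W. -/
open CategoryTheory Finset

/-- The projection endomorphism `P_χ = (χ(1)/|G|) · Σ_{g ∈ G} χ(g⁻¹) ρ(g)` of the
representation `W`, associated to the character `χ` of the representation `M`. -/
noncomputable def Pchi {G : Type} [Group G] [Fintype G]
    (W M : FDRep ℂ G) : W →ₗ[ℂ] W :=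
  (M.character 1 / (Fintype.card G : ℂ)) • ∑ g : G, M.character g⁻¹ • W.ρ g

set_option linter.unusedSectionVars false
set_option maxHeartbeats 1000000

section PchiAux

variable {G : Type} [Group G] [Fintype G]

lemma Pchi_apply (W M : FDRep ℂ G) (x : W) :
    Pchi W M x = (M.character 1 / (Fintype.card G : ℂ)) •
      ∑ g : G, M.character g⁻¹ • W.ρ g x := by
  simp [Pchi, LinearMap.sum_apply]

lemma Pchi_mem (W M : FDRep ℂ G) {p : Submodule ℂ W}
    (hp : ∀ g : G, ∀ x ∈ p, W.ρ g x ∈ p) {x : W} (hx : x ∈ p) :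
    Pchi W M x ∈ p := by
  rw [Pchi_apply]
  exact p.smul_mem _ (Submodule.sum_mem _ fun g _ => p.smul_mem _ (hp g x hx))

lemma Pchi_equivariant (W M : FDRep ℂ G) (h : G) (x : W) :
    Pchi W M (W.ρ h x) = W.ρ h (Pchi W M x) := by
  rw [Pchi_apply, Pchi_apply, map_smul, map_sum]
  congr 1
  refine (Fintype.sum_equiv (MulAut.conj h).toEquiv
      (fun g => W.ρ h (M.character g⁻¹ • W.ρ g x))
      (fun g => M.character g⁻¹ • W.ρ g (W.ρ h x)) fun g => ?_).symm
  simp only [MulEquiv.toEquiv_eq_coe, EquivLike.coe_coe, MulEquiv.coe_toEquiv, MulAut.conj_apply, map_smul]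
  rw [show ((h * g * h⁻¹)⁻¹ : G) = h * g⁻¹ * h⁻¹ by group, FDRep.char_conj]
  congr 1
  have key : ∀ (a b : G) (y : W), W.ρ a (W.ρ b y) = W.ρ (a * b) y := fun a b y => by
    rw [map_mul, Module.End.mul_apply]
  rw [key, key, show h * g * h⁻¹ * h = h * g by group]

noncomputable def subρ (W : FDRep ℂ G) (p : Submodule ℂ W)
    (hp : ∀ g : G, ∀ x ∈ p, W.ρ g x ∈ p) : Representation ℂ G p where
  toFun g := (W.ρ g).restrict (hp g)
  map_one' := by
    refine LinearMap.ext fun x => Subtype.ext ?_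
    simp [LinearMap.restrict_apply]
  map_mul' g h := by
    refine LinearMap.ext fun x => Subtype.ext ?_
    simp only [LinearMap.restrict_apply, map_mul, Module.End.mul_apply]

noncomputable def subRep (W : FDRep ℂ G) (p : Submodule ℂ W)
    (hp : ∀ g : G, ∀ x ∈ p, W.ρ g x ∈ p) : FDRep ℂ G :=
  FDRep.of (subρ W p hp)

lemma subRep_ρ (W : FDRep ℂ G) (p : Submodule ℂ W)
    (hp : ∀ g : G, ∀ x ∈ p, W.ρ g x ∈ p) (g : G) :
    (subRep W p hp).ρ g = (W.ρ g).restrict (hp g) := rfl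

lemma finrank_ne_zero (N : FDRep ℂ G) [Simple N] : Module.finrank ℂ N ≠ 0 := by
  intro h0
  haveI : Subsingleton N := Module.finrank_zero_iff.mp h0
  haveI : Subsingleton (↑N.V : Type) := ‹Subsingleton _›
  refine CategoryTheory.id_nonzero N ?_
  exact Action.hom_ext _ _ (FGModuleCat.hom_ext (LinearMap.ext fun v => Subsingleton.elim _ _))


open scoped Classical in
lemma Pchi_simple (N M : FDRep ℂ G) [Simple N] [Simple M] :
    Pchi N M = if Nonempty (N ≅ M) then LinearMap.id else 0 := by
  have hcard : (Fintype.card G : ℂ) ≠ 0 := by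
    exact_mod_cast (Fintype.card_ne_zero : Fintype.card G ≠ 0)
  letI : Invertible (Fintype.card G : ℂ) := invertibleOfNonzero hcard
  set f : N ⟶ N := ⟨FGModuleCat.ofHom (Pchi N M), fun g => FGModuleCat.hom_ext (LinearMap.ext fun x => Pchi_equivariant N M g x)⟩ with hf
  obtain ⟨c, hc⟩ := CategoryTheory.endomorphism_simple_eq_smul_id (𝕜 := ℂ) f
  have hPc : Pchi N M = c • LinearMap.id := by
    have h1 := congrArg Action.Hom.hom hc
    rw [Action.smul_hom] at h1
    exact congrArg (fun φ => φ.hom.hom) h1.symm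
  letI : Invertible (Nat.card G : ℂ) := invertibleOfNonzero (by rwa [Nat.card_eq_fintype_card])
  have horth : ⅟(Fintype.card G : ℂ) • ∑ g : G, N.character g * M.character g⁻¹
      = if Nonempty (N ≅ M) then (1 : ℂ) else 0 := by
    rw [smul_eq_mul, invOf_eq_inv, ← Nat.card_eq_fintype_card]
    exact FDRep.char_orthonormal (k := ℂ) N M
  have hsum : ∑ g : G, M.character g⁻¹ * N.character g
      = (Fintype.card G : ℂ) * (if Nonempty (N ≅ M) then 1 else 0) := by
    have h2 : (Fintype.card G : ℂ) • (⅟(Fintype.card G : ℂ) •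
        ∑ g : G, N.character g * M.character g⁻¹)
        = (Fintype.card G : ℂ) • (if Nonempty (N ≅ M) then (1:ℂ) else 0) := by
      rw [horth]
    rw [smul_invOf_smul, smul_eq_mul] at h2
    rw [← h2]
    exact Finset.sum_congr rfl fun g _ => mul_comm _ _
  have ht1 : LinearMap.trace ℂ N (Pchi N M)
      = (M.character 1 / (Fintype.card G : ℂ)) * ∑ g : G, M.character g⁻¹ * N.character g := by
    rw [show Pchi N M
        = (M.character 1 / (Fintype.card G : ℂ)) • ∑ g : G, M.character g⁻¹ • N.ρ g from rfl]
    rw [map_smul, map_sum, smul_eq_mul]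
    congr 1
    refine Finset.sum_congr rfl fun g _ => ?_
    rw [map_smul, smul_eq_mul]
    rfl
  have ht2 : LinearMap.trace ℂ N (Pchi N M) = c * (Module.finrank ℂ N : ℂ) := by
    rw [hPc, map_smul, LinearMap.trace_id, smul_eq_mul]
  have hd : (Module.finrank ℂ N : ℂ) ≠ 0 := Nat.cast_ne_zero.mpr (finrank_ne_zero N)
  have heq : c * (Module.finrank ℂ N : ℂ)
      = M.character 1 * (if Nonempty (N ≅ M) then 1 else 0) := by
    rw [← ht2, ht1, hsum]
    field_simp
  by_cases hiso : Nonempty (N ≅ M)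
  · rw [if_pos hiso] at heq ⊢
    have hM1 : M.character 1 = (Module.finrank ℂ N : ℂ) := by
      rw [← FDRep.char_iso hiso.some, FDRep.char_one]
    rw [hM1, mul_one] at heq
    have hc1 : c = 1 := mul_right_cancel₀ hd (by rw [heq, one_mul])
    rw [hPc, hc1, one_smul]
  · rw [if_neg hiso] at heq ⊢
    rw [mul_zero] at heq
    have hc0 : c = 0 := by
      rcases mul_eq_zero.mp heq with h | h
      · exact h
      · exact absurd h hd
    rw [hPc, hc0, zero_smul]

lemma Pchi_coe (W M N : FDRep ℂ G) (p : Submodule ℂ W)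
    (hp : ∀ g : G, ∀ x ∈ p, W.ρ g x ∈ p) (e : p ≃ₗ[ℂ] N)
    (he : ∀ (g : G) (x : p), e ((W.ρ g).restrict (hp g) x) = N.ρ g (e x)) (x : p) :
    Pchi W M (x : W) = ((e.symm (Pchi N M (e x))) : W) := by
  have h1 : Pchi N M (e x) = e ((M.character 1 / (Fintype.card G : ℂ)) •
      ∑ g : G, M.character g⁻¹ • (W.ρ g).restrict (hp g) x) := by
    rw [Pchi_apply, map_smul, map_sum]
    congr 1
    refine Finset.sum_congr rfl fun g _ => ?_
    rw [map_smul, he]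
  rw [h1, e.symm_apply_apply, Pchi_apply]
  push_cast [Submodule.coe_smul, AddSubmonoidClass.coe_finset_sum]
  rfl

lemma Pchi_eq_self (W M : FDRep ℂ G) [Simple M] (p : Submodule ℂ W)
    (hp : ∀ g : G, ∀ x ∈ p, W.ρ g x ∈ p) (e : p ≃ₗ[ℂ] M)
    (he : ∀ (g : G) (x : p), e ((W.ρ g).restrict (hp g) x) = M.ρ g (e x)) (x : p) :
    Pchi W M (x : W) = (x : W) := by
  rw [Pchi_coe W M M p hp e he x, Pchi_simple M M, if_pos ⟨Iso.refl M⟩]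
  simp

lemma Pchi_eq_zero (W M N : FDRep ℂ G) [Simple M] [Simple N]
    (hiso : ¬ Nonempty (N ≅ M)) (p : Submodule ℂ W)
    (hp : ∀ g : G, ∀ x ∈ p, W.ρ g x ∈ p) (e : p ≃ₗ[ℂ] N)
    (he : ∀ (g : G) (x : p), e ((W.ρ g).restrict (hp g) x) = N.ρ g (e x)) (x : p) :
    Pchi W M (x : W) = 0 := by
  rw [Pchi_coe W M N p hp e he x, Pchi_simple N M, if_neg hiso]
  simp

lemma asAlgebraHom_mem (W : FDRep ℂ G) {p : Submodule ℂ W}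
    (hp : ∀ g : G, ∀ x ∈ p, W.ρ g x ∈ p) (a : MonoidAlgebra ℂ G) {x : W} (hx : x ∈ p) :
    Representation.asAlgebraHom W.ρ a x ∈ p := by
  induction a using MonoidAlgebra.induction_linear with
  | zero => simpa using p.zero_mem
  | add a b ha hb =>
      rw [map_add, LinearMap.add_apply]
      exact p.add_mem ha hb
  | single g r =>
      rw [Representation.asAlgebraHom_single]
      exact p.smul_mem r (hp g x hx)

noncomputable def fromSub (W : FDRep ℂ G) (p : Submodule ℂ W)
    (hp : ∀ g : G, ∀ x ∈ p, W.ρ g x ∈ p) :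
    Submodule (MonoidAlgebra ℂ G) (Representation.asModule W.ρ) where
  carrier := p.carrier
  add_mem' := fun ha hb => p.add_mem ha hb
  zero_mem' := p.zero_mem
  smul_mem' := fun a x hx => asAlgebraHom_mem W hp a hx

noncomputable def toSub (W : FDRep ℂ G)
    (q : Submodule (MonoidAlgebra ℂ G) (Representation.asModule W.ρ)) : Submodule ℂ W where
  carrier := q.carrier
  add_mem' := fun ha hb => q.add_mem ha hb
  zero_mem' := q.zero_mem
  smul_mem' := fun c x hx => by
    have h1 : Representation.asAlgebraHom W.ρ (algebraMap ℂ (MonoidAlgebra ℂ G) c) x ∈ q :=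
      q.smul_mem _ hx
    rwa [AlgHom.commutes, Module.algebraMap_end_apply] at h1

lemma toSub_inv (W : FDRep ℂ G) (q : Submodule (MonoidAlgebra ℂ G) (Representation.asModule W.ρ)) :
    ∀ g : G, ∀ x ∈ toSub W q, W.ρ g x ∈ toSub W q := fun g x hx => by
  have h1 : Representation.asAlgebraHom W.ρ (MonoidAlgebra.of ℂ G g) x ∈ q :=
    q.smul_mem _ hx
  rwa [Representation.asAlgebraHom_of] at h1

lemma sub_dichotomy (W : FDRep ℂ G) (q : Submodule (MonoidAlgebra ℂ G) (Representation.asModule W.ρ))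
    (hq : IsSimpleModule (MonoidAlgebra ℂ G) q)
    (r : Submodule (MonoidAlgebra ℂ G) (Representation.asModule W.ρ)) (hr : r ≤ q) : r = ⊥ ∨ r = q := by
  rcases eq_bot_or_eq_top (Submodule.comap q.subtype r) with h | h
  · left
    have h2 := congrArg (Submodule.map q.subtype) h
    rwa [Submodule.map_comap_subtype, inf_eq_right.mpr hr, Submodule.map_bot] at h2
  · right
    have h2 := congrArg (Submodule.map q.subtype) h
    rwa [Submodule.map_comap_subtype, inf_eq_right.mpr hr, Submodule.map_top,
      Submodule.range_subtype] at h2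

lemma hom_comm_apply' {X Y : FDRep ℂ G} (f : X ⟶ Y) (g : G) (x : X) :
    f.hom (X.ρ g x) = Y.ρ g (f.hom x) :=
  congrArg (fun φ => φ.hom.hom x) (f.comm g)

noncomputable def inclDef (W : FDRep ℂ G) (p : Submodule ℂ W)
    (hp : ∀ g : G, ∀ x ∈ p, W.ρ g x ∈ p) : subRep W p hp ⟶ W where
  hom := FGModuleCat.ofHom p.subtype
  comm := fun g => FGModuleCat.hom_ext (LinearMap.ext fun x => rfl)

lemma mono_injective {X Y : FDRep ℂ G} (f : X ⟶ Y) [Mono f] :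
    Function.Injective f.hom := by
  set K : Submodule ℂ X := LinearMap.ker f.hom.hom.hom with hK
  have hKinv : ∀ g : G, ∀ x ∈ K, X.ρ g x ∈ K := fun g x hx => by
    have : f.hom (X.ρ g x) = 0 := by
      rw [hom_comm_apply', show f.hom x = 0 from hx, map_zero]
    exact this
  have h0 : inclDef X K hKinv ≫ f = 0 := by
    apply Action.hom_ext
    refine FGModuleCat.hom_ext (LinearMap.ext fun x => ?_)
    exact x.2
  have hι : inclDef X K hKinv = 0 := by
    rw [← cancel_mono f, h0, Limits.zero_comp]
  have hKbot : K = ⊥ := by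
    refine Submodule.eq_bot_iff _ |>.mpr fun x hx => ?_
    have : (inclDef X K hKinv).hom ⟨x, hx⟩ = (0 : subRep X K hKinv ⟶ X).hom ⟨x, hx⟩ := by
      rw [hι]
    exact this
  exact LinearMap.ker_eq_bot.mp hKbot

lemma isIso_of_bijective {X Y : FDRep ℂ G} (f : X ⟶ Y)
    (hb : Function.Bijective f.hom.hom.hom) : IsIso f := by
  set e := LinearEquiv.ofBijective f.hom.hom.hom hb with he
  have hfe : ∀ x : X, f.hom x = e x := fun x => rfl
  refine ⟨⟨⟨FGModuleCat.ofHom (e.symm.toLinearMap : Y →ₗ[ℂ] X), fun g => FGModuleCat.hom_ext (LinearMap.ext fun y => ?_)⟩,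
    Action.hom_ext _ _ (FGModuleCat.hom_ext (LinearMap.ext fun x => ?_)), Action.hom_ext _ _ (FGModuleCat.hom_ext (LinearMap.ext fun y => ?_))⟩⟩
  · -- comm : e.symm (Y.ρ g y) = X.ρ g (e.symm y)
    apply hb.1
    show e (e.symm (Y.ρ g y)) = f.hom (X.ρ g (e.symm y))
    rw [e.apply_symm_apply, hom_comm_apply', hfe, e.apply_symm_apply]
  · -- f ≫ inv = 𝟙 X
    show e.symm (f.hom x) = x
    rw [hfe, e.symm_apply_apply]
  · -- inv ≫ f = 𝟙 Y
    show f.hom (e.symm y) = y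
    rw [hfe, e.apply_symm_apply]

lemma simple_subRep (W : FDRep ℂ G) (q : Submodule (MonoidAlgebra ℂ G) (Representation.asModule W.ρ))
    (hq : IsSimpleModule (MonoidAlgebra ℂ G) q) :
    Simple (subRep W (toSub W q) (toSub_inv W q)) := by
  set p := toSub W q with hpdef
  set N := subRep W p (toSub_inv W q) with hNdef
  constructor
  intro Y f m
  constructor
  · -- IsIso f → f ≠ 0
    intro hiso h0
    have h1 : 𝟙 N = 0 := by
      rw [← IsIso.inv_hom_id f]
      simp only [h0, Limits.comp_zero]
    haveI := hq.nontrivial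
    obtain ⟨a, b, hab⟩ := exists_pair_ne (↥q)
    apply hab
    have hz : ∀ z : ↥p, z = 0 := fun z => by
      have : (𝟙 N : N ⟶ N).hom z = (0 : N ⟶ N).hom z := by rw [h1]
      exact this
    have ha : (⟨a.1, a.2⟩ : ↥p) = 0 := hz _
    have hb' : (⟨b.1, b.2⟩ : ↥p) = 0 := hz _
    ext
    have h2 := congrArg Subtype.val ha
    have h3 := congrArg Subtype.val hb'
    simp only at h2 h3
    rw [show (a : Representation.asModule W.ρ) = 0 from h2,
      show (b : Representation.asModule W.ρ) = 0 from h3]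
  · -- f ≠ 0 → IsIso f
    intro hne
    have hinj : Function.Injective f.hom.hom.hom := mono_injective f
    -- the image inside W
    set R : Submodule ℂ W := Submodule.map p.subtype
      (LinearMap.range f.hom.hom.hom) with hRdef
    have hRinv : ∀ g : G, ∀ x ∈ R, W.ρ g x ∈ R := by
      rintro g x ⟨z, ⟨y, rfl⟩, rfl⟩
      refine ⟨f.hom (Y.ρ g y), ⟨Y.ρ g y, rfl⟩, ?_⟩
      rw [hom_comm_apply']
      rfl
    have hRle : fromSub W R hRinv ≤ q := by
      rintro x ⟨z, _, rfl⟩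
      exact z.2
    rcases sub_dichotomy W q hq (fromSub W R hRinv) hRle with hbot | htop
    · exfalso
      apply hne
      apply Action.hom_ext
      refine FGModuleCat.hom_ext (LinearMap.ext fun y => ?_)
      have hmem : p.subtype (f.hom y) ∈ fromSub W R hRinv := ⟨f.hom y, ⟨y, rfl⟩, rfl⟩
      rw [hbot] at hmem
      have h5 : p.subtype (f.hom y) = 0 := hmem
      exact Subtype.ext h5
    · have hsurj : Function.Surjective f.hom.hom.hom := by
        intro z
        have hmem : p.subtype z ∈ fromSub W R hRinv := by
          rw [htop]; exact z.2
        obtain ⟨w, ⟨y, rfl⟩, hw⟩ := hmem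
        exact ⟨y, Subtype.ext hw⟩
      exact isIso_of_bijective f ⟨hinj, hsurj⟩


end PchiAux

/-- the range of `P_χ` is the sum of all `G`-invariant subspaces `p` of `W`
on which the restriction of `ρ` is isomorphic to `M`, i.e. the `M`-isotypic component
of `W`. -/
theorem range_Pchi_eq_isotypic {G : Type} [Group G] [Fintype G]
    (W M : FDRep ℂ G) [Simple M] :
    LinearMap.range (Pchi W M) =
      sSup {p : Submodule ℂ W |
        ∃ hp : ∀ g : G, ∀ x ∈ p, W.ρ g x ∈ p,
          ∃ e : p ≃ₗ[ℂ] M, ∀ (g : G) (x : p),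
            e ((W.ρ g).restrict (hp g) x) = M.ρ g (e x)} := by
  haveI : NeZero (Fintype.card G : ℂ) :=
    ⟨by exact_mod_cast (Fintype.card_ne_zero : Fintype.card G ≠ 0)⟩
  apply le_antisymm
  · rintro y ⟨w, rfl⟩
    have htop := IsSemisimpleModule.sSup_simples_eq_top (MonoidAlgebra ℂ G)
      (Representation.asModule W.ρ)
    let w' : Representation.asModule W.ρ := w
    have hw : w' ∈
        sSup {m : Submodule (MonoidAlgebra ℂ G) (Representation.asModule W.ρ) |
          IsSimpleModule (MonoidAlgebra ℂ G) m} := by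
      rw [htop]; trivial
    rw [sSup_eq_iSup'] at hw
    refine Submodule.iSup_induction (x := w') _
      (motive := fun z : Representation.asModule W.ρ => Pchi W M z ∈ sSup {p : Submodule ℂ W |
        ∃ hp : ∀ g : G, ∀ x ∈ p, W.ρ g x ∈ p,
          ∃ e : p ≃ₗ[ℂ] M, ∀ (g : G) (x : p),
            e ((W.ρ g).restrict (hp g) x) = M.ρ g (e x)}) hw ?_ ?_ ?_
    · rintro ⟨q, hq⟩ x hx
      show Pchi W M x ∈ _
      haveI hqs : IsSimpleModule (MonoidAlgebra ℂ G) q := hq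
      haveI := simple_subRep W q hqs
      by_cases hiso : Nonempty (subRep W (toSub W q) (toSub_inv W q) ≅ M)
      · obtain ⟨i⟩ := hiso
        have he : ∀ (g : G) (z : ↥(toSub W q)),
            (FDRep.isoToLinearEquiv i) ((W.ρ g).restrict (toSub_inv W q g) z)
              = M.ρ g ((FDRep.isoToLinearEquiv i) z) := fun g z => by
          rw [FDRep.Iso.conj_ρ i g]
          simp only [LinearEquiv.conj_apply, LinearMap.comp_apply, LinearEquiv.coe_coe,
            LinearEquiv.symm_apply_apply]
          exact congrArg (FDRep.isoToLinearEquiv i) (congrArg ((subRep W (toSub W q) (toSub_inv W q)).ρ g) ((FDRep.isoToLinearEquiv i).symm_apply_apply z).symm)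
        have hpS : toSub W q ∈ {p : Submodule ℂ W |
            ∃ hp : ∀ g : G, ∀ x ∈ p, W.ρ g x ∈ p,
              ∃ e : p ≃ₗ[ℂ] M, ∀ (g : G) (x : p),
                e ((W.ρ g).restrict (hp g) x) = M.ρ g (e x)} :=
          ⟨toSub_inv W q, FDRep.isoToLinearEquiv i, he⟩
        have hPx : Pchi W M x ∈ toSub W q := Pchi_mem W M (toSub_inv W q) hx
        exact le_sSup hpS hPx
      · have hx' : x ∈ toSub W q := hx
        have h0 : Pchi W M x = 0 :=
          Pchi_eq_zero W M (subRep W (toSub W q) (toSub_inv W q)) hiso (toSub W q)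
            (toSub_inv W q) (LinearEquiv.refl ℂ _) (fun g z => rfl) ⟨x, hx'⟩
        rw [h0]
        exact Submodule.zero_mem _
    · show Pchi W M 0 ∈ _
      rw [map_zero]
      exact Submodule.zero_mem _
    · intro a b ha hb
      show Pchi W M (a + b) ∈ _
      erw [map_add]
      exact Submodule.add_mem _ ha hb
  · refine sSup_le ?_
    rintro p ⟨hp, e, he⟩ x hx
    exact ⟨x, Pchi_eq_self W M p hp e he ⟨x, hx⟩⟩
end

section
/- For every finite-dimensional complex representation of the symmetric group S_n = Perm(Fin n) with character χ, and every permutation σ ∈ S_n, the character value χ(σ) is a rational integer, i.e., χ(σ) lies in the image of ℤ under the canonical map ℤ → ℂ. -/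
open Module LinearMap Set

lemma aux_nil_pow {R A : Type*} [CommRing R] [Ring A] [Algebra R A] (a : A) (μ : R)
    (h : IsNilpotent (a - algebraMap R A μ)) (k : ℕ) :
    IsNilpotent (a ^ k - algebraMap R A (μ ^ k)) := by
  let B := Algebra.adjoin R ({a} : Set A)
  letI : CommRing B := Algebra.adjoinCommRingOfComm R (by
    rintro x rfl y rfl; rfl)
  let a' : B := ⟨a, Algebra.subset_adjoin rfl⟩
  obtain ⟨n, hn⟩ := h
  have key : (B.val) (a' - algebraMap R B μ) = a - algebraMap R A μ := by
    rw [map_sub, AlgHom.commutes]; rfl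
  have h' : IsNilpotent (a' - algebraMap R B μ) := by
    refine ⟨n, ?_⟩
    apply Subtype.coe_injective
    have : (B.val) ((a' - algebraMap R B μ) ^ n) = 0 := by rw [map_pow, key, hn]
    simpa using this
  obtain ⟨z, hz⟩ := sub_dvd_pow_sub_pow a' (algebraMap R B μ) k
  have h2 : IsNilpotent (a' ^ k - algebraMap R B (μ ^ k)) := by
    rw [map_pow, hz]
    exact (Commute.all _ z).isNilpotent_mul_right h'
  obtain ⟨j, hj⟩ := h2
  refine ⟨j, ?_⟩
  have e : (B.val) (a' ^ k - algebraMap R B (μ ^ k)) = a ^ k - algebraMap R A (μ ^ k) := by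
    rw [map_sub, map_pow, AlgHom.commutes]; rfl
  calc (a ^ k - algebraMap R A (μ ^ k)) ^ j
      = (B.val) ((a' ^ k - algebraMap R B (μ ^ k)) ^ j) := by rw [map_pow B.val (a' ^ k - algebraMap R B (μ ^ k)) j, e]
    _ = 0 := by rw [hj, map_zero]

lemma aux_trace_pow {M : Type*} [AddCommGroup M] [Module ℂ M] [FiniteDimensional ℂ M]
    (g : Module.End ℂ M) (μ : ℂ) (hnil : IsNilpotent (g - algebraMap ℂ (Module.End ℂ M) μ))
    (k : ℕ) : LinearMap.trace ℂ M (g ^ k) = μ ^ k * finrank ℂ M := by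
  have h1 : IsNilpotent (g ^ k - algebraMap ℂ (Module.End ℂ M) (μ ^ k)) :=
    aux_nil_pow g μ hnil k
  have h2 : LinearMap.trace ℂ M (g ^ k - algebraMap ℂ (Module.End ℂ M) (μ ^ k)) = 0 :=
    (LinearMap.isNilpotent_trace_of_isNilpotent h1).eq_zero
  have h3 : g ^ k = (g ^ k - algebraMap ℂ (Module.End ℂ M) (μ ^ k))
      + algebraMap ℂ (Module.End ℂ M) (μ ^ k) := by abel
  rw [h3, map_add, h2, zero_add, Algebra.algebraMap_eq_smul_one, map_smul,
    LinearMap.trace_one, smul_eq_mul]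

lemma aux_restrict_sub (M : Type*) [AddCommGroup M] [Module ℂ M]
    (f : Module.End ℂ M) (μ : ℂ) (p : Submodule ℂ M)
    (h1 : MapsTo f p p) (h2 : MapsTo (f - algebraMap ℂ (Module.End ℂ M) μ) p p) :
    f.restrict h1 - algebraMap ℂ (Module.End ℂ p) μ
      = (f - algebraMap ℂ (Module.End ℂ M) μ).restrict h2 := by
  ext x
  simp [LinearMap.restrict_apply, Module.algebraMap_end_apply]
  rfl

lemma aux_trace_decomp {M : Type*} [AddCommGroup M] [Module ℂ M] [FiniteDimensional ℂ M]
    (f : Module.End ℂ M) (m : ℕ) (hm0 : 0 < m) (hm : f ^ m = 1) :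
    ∃ (t : Finset ℂ) (d : ℂ → ℕ), (∀ μ ∈ t, μ ^ m = 1) ∧
      ∀ k : ℕ, LinearMap.trace ℂ M (f ^ k) = ∑ μ ∈ t, (d μ : ℕ) * μ ^ k := by
  classical
  set N := f.maxGenEigenspace with hN
  have internal : DirectSum.IsInternal N :=
    DirectSum.isInternal_submodule_of_iSupIndep_of_iSup_eq_top
      f.independent_maxGenEigenspace f.iSup_maxGenEigenspace_eq_top
  -- restriction facts
  have hmapsTo : ∀ (k : ℕ) (μ : ℂ), MapsTo (f ^ k) (N μ) (N μ) := fun k μ =>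
    Module.End.mapsTo_maxGenEigenspace_of_comm ((Commute.refl f).pow_right k) μ
  have hmaps1 : ∀ μ : ℂ, MapsTo f (N μ) (N μ) := fun μ =>
    Module.End.mapsTo_maxGenEigenspace_of_comm (Commute.refl f) μ
  have hnil : ∀ μ : ℂ, IsNilpotent ((f.restrict (hmaps1 μ))
      - algebraMap ℂ (Module.End ℂ (N μ)) μ) := by
    intro μ
    rw [aux_restrict_sub M f μ (N μ) (hmaps1 μ)
      (Module.End.mapsTo_maxGenEigenspace_of_comm
        (Algebra.mul_sub_algebraMap_commutes f μ) μ)]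
    exact Module.End.isNilpotent_restrict_maxGenEigenspace_sub_algebraMap f μ _
  have hrestr_pow : ∀ (k : ℕ) (μ : ℂ),
      (f ^ k).restrict (hmapsTo k μ) = (f.restrict (hmaps1 μ)) ^ k := by
    intro k μ
    rw [Module.End.pow_restrict k (hmaps1 μ)]
  have htr : ∀ (k : ℕ) (μ : ℂ), LinearMap.trace ℂ (N μ) ((f ^ k).restrict (hmapsTo k μ))
      = μ ^ k * (Module.finrank ℂ (N μ)) := by
    intro k μ
    rw [hrestr_pow k μ]
    exact aux_trace_pow _ μ (hnil μ) k
  -- eigenvalues are m-th roots of unity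
  have heig : ∀ μ : ℂ, N μ ≠ ⊥ → μ ^ m = 1 := by
    intro μ hμ
    have h1 : LinearMap.trace ℂ (N μ) ((f ^ m).restrict (hmapsTo m μ))
        = μ ^ m * (Module.finrank ℂ (N μ)) := htr m μ
    have h2 : (f ^ m).restrict (hmapsTo m μ) = 1 := by
      ext x; simp [LinearMap.restrict_apply, hm]
    rw [h2, LinearMap.trace_one] at h1
    have hrank : (Module.finrank ℂ (N μ) : ℂ) ≠ 0 := by
      rw [Ne, Nat.cast_eq_zero, Submodule.finrank_eq_zero (R := ℂ) (M := M)]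
      exact hμ
    have h3 : μ ^ m * (Module.finrank ℂ (N μ) : ℂ) = 1 * (Module.finrank ℂ (N μ) : ℂ) := by
      rw [one_mul, ← h1]
    exact mul_right_cancel₀ hrank h3
  have hfin : {μ : ℂ | N μ ≠ ⊥}.Finite := by
    have hp : ((Polynomial.X : Polynomial ℂ) ^ m - Polynomial.C 1) ≠ 0 :=
      Polynomial.X_pow_sub_C_ne_zero hm0 1
    apply Set.Finite.subset (Polynomial.finite_setOf_isRoot hp)
    intro μ hμ
    simp only [Set.mem_setOf_eq, Polynomial.IsRoot, Polynomial.eval_sub,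
      Polynomial.eval_pow, Polynomial.eval_X, Polynomial.eval_C, sub_eq_zero]
    exact heig μ hμ
  refine ⟨hfin.toFinset, fun μ => Module.finrank ℂ (N μ), ?_, ?_⟩
  · intro μ hμ
    exact heig μ (by simpa using hμ)
  · intro k
    rw [LinearMap.trace_eq_sum_trace_restrict' internal hfin (fun μ => hmapsTo k μ)]
    refine Finset.sum_congr rfl fun μ _ => ?_
    rw [htr k μ]; ring

open Equiv Equiv.Perm in
theorem aux_cycleType_pow_coprime {α : Type*} [Fintype α] [DecidableEq α] (σ : Perm α) (k : ℕ)
    (h : Nat.Coprime k (orderOf σ)) : (σ ^ k).cycleType = σ.cycleType := by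
  induction σ using Equiv.Perm.cycle_induction_on with
  | base_one => simp
  | base_cycles c hc =>
      rw [hc.cycleType, Equiv.Perm.IsCycle.cycleType (hc.pow_iff.mpr h),
        Equiv.Perm.support_pow_coprime h]
  | induction_disjoint f g hd hf ihf ihg =>
      have horder : orderOf (f * g) = Nat.lcm (orderOf f) (orderOf g) := hd.orderOf
      have h1 : Nat.Coprime k (orderOf f) :=
        Nat.Coprime.coprime_dvd_right (horder ▸ Nat.dvd_lcm_left _ _) h
      have h2 : Nat.Coprime k (orderOf g) :=
        Nat.Coprime.coprime_dvd_right (horder ▸ Nat.dvd_lcm_right _ _) h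
      have hd' : (f ^ k).Disjoint (g ^ k) := hd.pow_disjoint_pow k k
      rw [hd.commute.mul_pow, hd'.cycleType_mul, hd.cycleType_mul, ihf h1, ihg h2]

open CategoryTheory

/-- every character value of a finite-dimensional complex representation of
the symmetric group `S_n = Perm (Fin n)` is a rational integer. -/
theorem character_symmetricGroup_integer (n : ℕ)
    (W : FDRep ℂ (Equiv.Perm (Fin n))) (σ : Equiv.Perm (Fin n)) :
    ∃ m : ℤ, W.character σ = (m : ℂ) := by
  classical
  set m : ℕ := orderOf σ with hmdef
  have hm0 : 0 < m := orderOf_pos σ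
  haveI : NeZero m := ⟨hm0.ne'⟩
  set f : Module.End ℂ W := W.ρ σ with hfdef
  have hfpow : ∀ k : ℕ, W.ρ (σ ^ k) = f ^ k := fun k => map_pow W.ρ σ k
  have hm : f ^ m = 1 := by
    rw [← hfpow, pow_orderOf_eq_one, map_one]
  obtain ⟨t, d, hroot, htr⟩ := aux_trace_decomp f m hm0 hm
  -- character of powers
  have hchar_pow : ∀ k : ℕ, W.character (σ ^ k) = ∑ μ ∈ t, (d μ : ℂ) * μ ^ k := by
    intro k
    have : W.character (σ ^ k) = LinearMap.trace ℂ W (f ^ k) := by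
      rw [FDRep.character, hfpow]
    rw [this, htr k]
  -- conjugation invariance for coprime powers
  have hconj : ∀ k : ℕ, Nat.Coprime k m → W.character (σ ^ k) = W.character σ := by
    intro k hk
    have : IsConj σ (σ ^ k) :=
      Equiv.Perm.isConj_iff_cycleType_eq.mpr (aux_cycleType_pow_coprime σ k hk).symm
    obtain ⟨c, hc⟩ := isConj_iff.mp this
    rw [← hc, FDRep.char_conj]
  -- the cyclotomic field
  set m' : ℕ+ := ⟨m, hm0⟩ with hm'def
  haveI : NeZero (m' : ℕ) := ⟨m'.ne_zero⟩
  haveI : IsCyclotomicExtension {(m' : ℕ)} ℚ (CyclotomicField m' ℚ) :=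
    CyclotomicField.isCyclotomicExtension (m' : ℕ) ℚ
  haveI : FiniteDimensional ℚ (CyclotomicField m' ℚ) :=
    IsCyclotomicExtension.finiteDimensional {(m' : ℕ)} ℚ (CyclotomicField m' ℚ)
  haveI : IsGalois ℚ (CyclotomicField m' ℚ) := IsCyclotomicExtension.isGalois {(m' : ℕ)} ℚ _
  haveI : Algebra.IsAlgebraic ℚ (CyclotomicField m' ℚ) := Algebra.IsAlgebraic.of_finite ℚ _
  have hζ := IsCyclotomicExtension.zeta_spec m' ℚ (CyclotomicField m' ℚ)
  set ζ : CyclotomicField m' ℚ := IsCyclotomicExtension.zeta m' ℚ _ with hζdef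
  have hζm : IsPrimitiveRoot ζ m := hζ
  let ι : (CyclotomicField m' ℚ) →ₐ[ℚ] ℂ := IsAlgClosed.lift
  have hιinj : Function.Injective ι := ι.toRingHom.injective
  have hζℂ : IsPrimitiveRoot (ι ζ) m := hζm.map_of_injective hιinj
  -- express eigenvalues as powers of ι ζ
  have hex : ∀ μ : ℂ, ∃ i : ℕ, μ ∈ t → (ι ζ) ^ i = μ := by
    intro μ
    by_cases h : μ ∈ t
    · obtain ⟨i, _, hi⟩ := hζℂ.eq_pow_of_pow_eq_one (hroot μ h)
      exact ⟨i, fun _ => hi⟩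
    · exact ⟨0, fun h' => absurd h' h⟩
  choose a ha using hex
  set x : CyclotomicField m' ℚ := ∑ μ ∈ t, (d μ : CyclotomicField m' ℚ) * ζ ^ (a μ) with hxdef
  have hιx : ι x = W.character σ := by
    rw [hxdef, map_sum]
    have := hchar_pow 1
    rw [pow_one] at this
    rw [this]
    refine Finset.sum_congr rfl fun μ hμ => ?_
    rw [map_mul, map_pow, map_natCast, ha μ hμ, pow_one]
  -- x is Galois-fixed
  have hfix : ∀ g : (CyclotomicField m' ℚ) ≃ₐ[ℚ] (CyclotomicField m' ℚ), g x = x := by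
    intro g
    apply hιinj
    set k : ℕ := ((hζm.autToPow ℚ g : ZMod m)).val with hkdef
    have hgζ : g ζ = ζ ^ k := (hζm.autToPow_spec ℚ g).symm
    have hcop : Nat.Coprime k m := ZMod.val_coe_unit_coprime (hζm.autToPow ℚ g)
    have h1 : ι (g x) = ∑ μ ∈ t, (d μ : ℂ) * μ ^ k := by
      rw [hxdef, map_sum, map_sum]
      refine Finset.sum_congr rfl fun μ hμ => ?_
      rw [map_mul, map_mul, map_pow, map_natCast, map_natCast, hgζ, map_pow, map_pow,
        ← pow_mul, mul_comm k (a μ), pow_mul, ha μ hμ]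
    rw [h1, hιx, ← hchar_pow k, hconj k hcop]
  -- x is rational
  have htrace : algebraMap ℚ (CyclotomicField m' ℚ) (Algebra.trace ℚ (CyclotomicField m' ℚ) x)
      = ∑ g : (CyclotomicField m' ℚ) ≃ₐ[ℚ] (CyclotomicField m' ℚ), g x :=
    trace_eq_sum_automorphisms x
  have hsum : ∑ g : (CyclotomicField m' ℚ) ≃ₐ[ℚ] (CyclotomicField m' ℚ), g x
      = (Fintype.card ((CyclotomicField m' ℚ) ≃ₐ[ℚ] (CyclotomicField m' ℚ)) : CyclotomicField m' ℚ) * x := by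
    rw [Finset.sum_congr rfl fun g _ => hfix g]
    simp [Finset.sum_const, nsmul_eq_mul]
  have hcard : ((Fintype.card ((CyclotomicField m' ℚ) ≃ₐ[ℚ] (CyclotomicField m' ℚ)) : ℚ)) ≠ 0 := by
    exact_mod_cast Fintype.card_ne_zero
  set q : ℚ := Algebra.trace ℚ (CyclotomicField m' ℚ) x
      / (Fintype.card ((CyclotomicField m' ℚ) ≃ₐ[ℚ] (CyclotomicField m' ℚ))) with hqdef
  have hxq : x = algebraMap ℚ (CyclotomicField m' ℚ) q := by
    rw [hqdef, map_div₀, htrace, hsum]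
    rw [map_natCast]
    field_simp
  have hχq : W.character σ = (q : ℂ) := by
    rw [← hιx, hxq]
    have : ι (algebraMap ℚ (CyclotomicField m' ℚ) q) = algebraMap ℚ ℂ q := ι.commutes q
    rw [this, eq_ratCast]
  -- integrality
  have hint : IsIntegral ℤ (W.character σ) := by
    have h1 := hchar_pow 1
    rw [pow_one] at h1
    rw [h1]
    refine IsIntegral.sum _ fun μ hμ => ?_
    have hd : IsIntegral ℤ ((d μ : ℂ)) := by
      have := isIntegral_algebraMap (R := ℤ) (A := ℂ) (x := (d μ : ℤ))
      simpa using this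
    refine IsIntegral.mul hd ?_
    refine ⟨Polynomial.X ^ m - Polynomial.C 1, ?_, ?_⟩
    · exact Polynomial.monic_X_pow_sub_C 1 hm0.ne'
    · simp [sub_eq_zero, hroot μ hμ]
  have hqint : IsIntegral ℤ q := by
    rw [hχq] at hint
    have : (q : ℂ) = algebraMap ℚ ℂ q := (eq_ratCast (algebraMap ℚ ℂ) q).symm
    rw [this] at hint
    exact (isIntegral_algebraMap_iff (algebraMap ℚ ℂ).injective).mp hint
  obtain ⟨z, hz⟩ := IsIntegrallyClosed.isIntegral_iff.mp hqint
  refine ⟨z, ?_⟩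
  rw [hχq, ← hz]
  push_cast
  norm_num
end

section
/- For every tensor t ∈ V^{⊗n}, every permutation τ ∈ S_n, and every irreducible character χ of S_n, the Schur amplitudes are invariant under reordering: Σ_β (coord_β(π_χ(A_τ(t))))² = Σ_β (coord_β(π_χ(t)))², where coord_β are the coordinates with respect to the basis of V^{⊗n} induced by a basis b of V. In particular, the Schur amplitudes of the covariance tensor do not depend on the order of the variables X_1, …, X_n. -/
open scoped TensorProduct
open PiTensorProduct CategoryTheory

/-- The action of a permutation `τ ∈ S_n` on `V^{⊗n}`, sending
`w₁ ⊗ ⋯ ⊗ wₙ` to `w_{τ⁻¹(1)} ⊗ ⋯ ⊗ w_{τ⁻¹(n)}`. -/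
noncomputable def permAction {n : ℕ} {V : Type*} [AddCommGroup V] [Module ℝ V]
    (τ : Equiv.Perm (Fin n)) :
    (⨂[ℝ] _ : Fin n, V) ≃ₗ[ℝ] (⨂[ℝ] _ : Fin n, V) :=
  PiTensorProduct.reindex ℝ (fun _ : Fin n => V) τ

/-- Given a basis `b = (b₁, …, b_k)` of `V`, the coordinate of a tensor `t ∈ V^{⊗n}`
at the induced basis element `b_{β(1)} ⊗ ⋯ ⊗ b_{β(n)}` of `V^{⊗n}`: the linear
functional sending `w₁ ⊗ ⋯ ⊗ wₙ` to `∏ i, coord_{β(i)}(w_i)`. -/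
noncomputable def tensorCoord {n k : ℕ} {V : Type*} [AddCommGroup V] [Module ℝ V]
    (b : Module.Basis (Fin k) ℝ V) (β : Fin n → Fin k) : (⨂[ℝ] _ : Fin n, V) →ₗ[ℝ] ℝ :=
  PiTensorProduct.lift
    ((MultilinearMap.mkPiAlgebra ℝ (Fin n) ℝ).compLinearMap fun i => b.coord (β i))

/-- The Schur projector `π_χ = (χ(1)/n!) · Σ_{τ ∈ S_n} χ(τ⁻¹) A_τ` on `V^{⊗n}`, where
`c : S_n → ℝ` records the (real, in fact integer) values of the irreducible
character `χ`. -/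
noncomputable def schurProjector {n : ℕ} {V : Type*} [AddCommGroup V] [Module ℝ V]
    (c : Equiv.Perm (Fin n) → ℝ) :
    (⨂[ℝ] _ : Fin n, V) →ₗ[ℝ] (⨂[ℝ] _ : Fin n, V) :=
  (c 1 / (n.factorial : ℝ)) •
    ∑ τ : Equiv.Perm (Fin n), c τ⁻¹ • (permAction (V := V) τ).toLinearMap

lemma permAction_permAction {n : ℕ} {V : Type*} [AddCommGroup V] [Module ℝ V]
    (σ τ : Equiv.Perm (Fin n)) (t : ⨂[ℝ] _ : Fin n, V) :
    permAction σ (permAction τ t) = permAction (σ * τ) t := by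
  simpa [permAction, Equiv.Perm.mul_def] using PiTensorProduct.reindex_reindex (s := fun _ : Fin n => V) τ σ t

lemma tensorCoord_permAction {n k : ℕ} {V : Type*} [AddCommGroup V] [Module ℝ V]
    (b : Module.Basis (Fin k) ℝ V) (β : Fin n → Fin k) (τ : Equiv.Perm (Fin n))
    (t : ⨂[ℝ] _ : Fin n, V) :
    tensorCoord b β (permAction τ t) = tensorCoord b (β ∘ τ) t := by
  have : tensorCoord b β ∘ₗ (permAction (V := V) τ).toLinearMap = tensorCoord b (β ∘ τ) := by
    apply PiTensorProduct.ext
    apply MultilinearMap.ext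
    intro f
    simp only [LinearMap.compMultilinearMap_apply, LinearMap.comp_apply, LinearEquiv.coe_coe,
      permAction, reindex_tprod, tensorCoord, lift.tprod, MultilinearMap.compLinearMap_apply,
      MultilinearMap.mkPiAlgebra_apply, Function.comp_apply]
    exact (Equiv.prod_comp τ fun i => b.coord (β i) (f (τ.symm i))).symm.trans (by simp)
  exact LinearMap.congr_fun this t

/-- the squared Schur amplitudes are invariant under reordering the tensor
factors: for every tensor `t`, permutation `τ` and irreducible character `χ` of `S_n`
(with real values `c`), `Σ_β (coord_β (π_χ (A_τ t)))² = Σ_β (coord_β (π_χ t))²`.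
Hence the Schur amplitudes of the covariance tensor do not depend on the order of the
variables. -/
theorem schurAmplitude_permAction_invariant {n k : ℕ} {V : Type*}
    [AddCommGroup V] [Module ℝ V] (b : Module.Basis (Fin k) ℝ V)
    (M : FDRep ℂ (Equiv.Perm (Fin n))) [Simple M]
    (c : Equiv.Perm (Fin n) → ℝ) (hc : ∀ τ : Equiv.Perm (Fin n), (c τ : ℂ) = M.character τ)
    (t : ⨂[ℝ] _ : Fin n, V) (τ : Equiv.Perm (Fin n)) :
    ∑ β : Fin n → Fin k, (tensorCoord b β (schurProjector c (permAction τ t))) ^ 2 =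
      ∑ β : Fin n → Fin k, (tensorCoord b β (schurProjector c t)) ^ 2 := by
  have hclass : ∀ σ g : Equiv.Perm (Fin n), c (σ * g * σ⁻¹) = c g := by
    intro σ g
    have := FDRep.char_conj M g σ
    have h2 : ((c (σ * g * σ⁻¹) : ℝ) : ℂ) = ((c g : ℝ) : ℂ) := by
      rw [hc, hc, this]
    exact_mod_cast h2
  -- commutation of the projector with the permutation action
  have hcomm : schurProjector c (permAction τ t) = permAction τ (schurProjector c t) := by
    simp only [schurProjector, LinearMap.smul_apply, LinearMap.sum_apply, map_smul, map_sum]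
    congr 1
    rw [Fintype.sum_equiv (Equiv.mulLeft τ⁻¹ |>.trans (Equiv.mulRight τ)) _
      (fun σ => permAction τ ((c σ⁻¹ • (permAction (V := V) σ).toLinearMap) t))]
    · simp only [LinearMap.smul_apply, map_smul]
    · intro σ
      simp only [Equiv.trans_apply, Equiv.coe_mulRight, Equiv.coe_mulLeft,
        LinearMap.smul_apply, LinearMap.coe_single, map_smul]
      have hco : c (τ⁻¹ * σ * τ)⁻¹ = c σ⁻¹ := by
        have := hclass τ⁻¹ σ⁻¹
        rw [← this]; congr 1
      rw [hco]
      congr 1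
      show permAction σ (permAction τ t) = permAction τ (permAction (τ⁻¹ * σ * τ) t)
      rw [permAction_permAction, permAction_permAction]
      congr 1; group
  rw [hcomm]
  -- now reindex the sum over β
  refine Fintype.sum_equiv (Equiv.arrowCongr τ.symm (Equiv.refl (Fin k))) _ _ ?_
  intro β
  rw [tensorCoord_permAction]
  congr 1
end
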